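/- (Lemma 2: linear comparison bound for the triggering condition.) Let M ⊆ ℝ^d, let Z : ℝ^d → ℝ^d be C^(p−1) and Γ : ℝ^d → ℝ be C^p, and let χ₀, …, χ_{p−1} ∈ ℝ with χ_i ≥ 0 for i = 0, …, p−2 satisfy the differential inequality L_Z^p Γ(z) ≤ Σ_{i=0}^{p−1} χ_i · L_Z^i Γ(z) for every z ∈ M. Let 𝓏(·, z₀) be a solution of ż = Z(z) with 𝓏(0, z₀) = z₀ that remains in M for all t ∈ [0, T]. Let y : [0, T] → ℝ^p be the solution of the linear system ẏ_i = y_{i+1} (i = 1, …, p−1), ẏ_p = Σ_{i=0}^{p−1} χ_i · y_{i+1}, with initial condition y(0) = (Γ(z₀), L_Z Γ(z₀), …, L_Z^(p−1) Γ(z₀)). Then Γ(𝓏(t, z₀)) ≤ y₁(t) for all t ∈ [0, T]; more precisely, L_Z^(i−1) Γ(𝓏(t, z₀)) ≤ y_i(t) for every i = 1, …, p and t ∈ [0, T]. -/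

import Mathlib

open Topology Filter


/-- The Lie derivative of `g` along the vector field `Z`: `L_Z g (z) = Dg(z) (Z z)`. -/
noncomputable def lieDeriv {E : Type*} [NormedAddCommGroup E] [NormedSpace ℝ E]
    (Z : E → E) (g : E → ℝ) : E → ℝ :=
  fun z => fderiv ℝ g z (Z z)

/-- Iterated Lie derivatives: `L_Z^0 g = g`, `L_Z^(k+1) g = L_Z (L_Z^k g)`. -/
noncomputable def lieDerivIter {E : Type*} [NormedAddCommGroup E] [NormedSpace ℝ E]
    (Z : E → E) (g : E → ℝ) : ℕ → E → ℝ
  | 0 => g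
  | k + 1 => lieDeriv Z (lieDerivIter Z g k)

/-- Lemma 2 (linear comparison bound for the triggering condition).  If the coefficients
`χ₀, …, χ_{p-1}`, with `χ_i ≥ 0` for `i ≤ p - 2`, satisfy the differential inequality
`L_Z^p Γ ≤ Σ_i χ_i L_Z^i Γ` on `M`, the solution `𝓏` of `ż = Z z` starting at `z₀`
stays in `M` on `[0, T]`, and `y` solves the companion linear system
`ẏ_i = y_{i+1}` (`i < p - 1`), `ẏ_{p-1} = Σ_j χ_j y_j`, with initial condition
`y 0 = (Γ z₀, L_Z Γ z₀, …, L_Z^{p-1} Γ z₀)`, then `L_Z^i Γ (𝓏 t) ≤ y t i` for all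
`t ∈ [0, T]` and all `i`; in particular `Γ (𝓏 t) ≤ y t 0`. -/
theorem comparison_lemma_triggering {d p : ℕ} (hp : 0 < p)
    (M : Set (Fin d → ℝ)) (Z : (Fin d → ℝ) → (Fin d → ℝ)) (Γ : (Fin d → ℝ) → ℝ)
    (hZ : ContDiff ℝ ((p - 1 : ℕ) : ℕ∞) Z) (hΓ : ContDiff ℝ ((p : ℕ) : ℕ∞) Γ)
    (χ : Fin p → ℝ) (hχ : ∀ i : Fin p, (i : ℕ) + 1 < p → 0 ≤ χ i)
    (hineq : ∀ z ∈ M, lieDerivIter Z Γ p z ≤ ∑ i : Fin p, χ i * lieDerivIter Z Γ i z)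
    (z₀ : Fin d → ℝ) (T : ℝ) (hT : 0 ≤ T)
    (𝓏 : ℝ → (Fin d → ℝ)) (h𝓏0 : 𝓏 0 = z₀)
    (h𝓏deriv : ∀ t ∈ Set.Icc (0 : ℝ) T, HasDerivAt 𝓏 (Z (𝓏 t)) t)
    (h𝓏M : ∀ t ∈ Set.Icc (0 : ℝ) T, 𝓏 t ∈ M)
    (y : ℝ → Fin p → ℝ)
    (hy0 : ∀ i : Fin p, y 0 i = lieDerivIter Z Γ i z₀)
    (hyderiv : ∀ t ∈ Set.Icc (0 : ℝ) T, ∀ i : Fin p,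
      HasDerivAt (fun s => y s i)
        (if h : (i : ℕ) + 1 < p then y t ⟨(i : ℕ) + 1, h⟩
         else ∑ j : Fin p, χ j * y t j) t) :
    ∀ t ∈ Set.Icc (0 : ℝ) T, ∀ i : Fin p, lieDerivIter Z Γ i (𝓏 t) ≤ y t i := by
  classical
  -- Smoothness of iterated Lie derivatives
  have hsmooth : ∀ i : ℕ, i ≤ p → ContDiff ℝ ((p - i : ℕ) : ℕ∞) (lieDerivIter Z Γ i) := by
    intro i
    induction i with
    | zero => intro _; simpa [lieDerivIter] using hΓ
    | succ k ih =>
      intro hk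
      have hg := ih (by omega)
      have hmain : p - k = (p - (k + 1)) + 1 := by omega
      rw [hmain] at hg
      have hfd : ContDiff ℝ ((p - (k+1) : ℕ) : ℕ∞) (fderiv ℝ (lieDerivIter Z Γ k)) := by
        apply hg.fderiv_right
        push_cast
        exact le_rfl
      have hZm : ContDiff ℝ ((p - (k+1) : ℕ) : ℕ∞) Z :=
        hZ.of_le (Nat.cast_le.mpr (by omega : p - (k+1) ≤ p - 1))
      exact hfd.clm_apply hZm
  -- derivative of the iterated Lie derivatives along the solution
  have hD : ∀ t ∈ Set.Icc (0:ℝ) T, ∀ i : ℕ, i < p →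
      HasDerivAt (fun s => lieDerivIter Z Γ i (𝓏 s)) (lieDerivIter Z Γ (i+1) (𝓏 t)) t := by
    intro t ht i hi
    have h1 : ContDiff ℝ ((p - i : ℕ) : ℕ∞) (lieDerivIter Z Γ i) := hsmooth i (by omega)
    have hdiff : DifferentiableAt ℝ (lieDerivIter Z Γ i) (𝓏 t) := by
      refine (h1.differentiable ?_).differentiableAt
      exact_mod_cast (by omega : p - i ≠ 0)
    have hc := hdiff.hasFDerivAt.comp_hasDerivAt t (h𝓏deriv t ht)
    simpa [lieDerivIter, lieDeriv, Function.comp_def] using hc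
  set K : ℝ := 2 + ∑ j : Fin p, |χ j| with hKdef
  have hsum_nonneg : (0:ℝ) ≤ ∑ j : Fin p, |χ j| :=
    Finset.sum_nonneg fun _ _ => abs_nonneg _
  have hK1 : (1:ℝ) < K := by simp only [hKdef]; linarith
  have hKsum : ∑ j : Fin p, |χ j| < K := by simp only [hKdef]; linarith
  -- the key comparison claim
  have key : ∀ ε : ℝ, 0 < ε → ∀ t ∈ Set.Icc (0:ℝ) T, ∀ i : Fin p,
      lieDerivIter Z Γ i (𝓏 t) - y t i ≤ ε * Real.exp (K * t) := by
    intro ε hε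
    by_contra hcon
    push_neg at hcon
    obtain ⟨t₁, ht₁, i₁, hi₁⟩ := hcon
    set u : Fin p → ℝ → ℝ := fun j s => lieDerivIter Z Γ j (𝓏 s) - y s j with hudef
    set φ : ℝ → ℝ := fun s => ε * Real.exp (K * s) with hφdef
    have hφpos : ∀ s : ℝ, 0 < φ s := fun s => by positivity
    set A : Set ℝ := {s | s ∈ Set.Icc (0:ℝ) T ∧ ∃ j : Fin p, φ s ≤ u j s} with hAdef
    have hA_ne : A.Nonempty := ⟨t₁, ht₁, i₁, le_of_lt hi₁⟩
    have hA_bdd : BddBelow A := ⟨0, fun s hs => hs.1.1⟩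
    have hucont : ∀ j : Fin p, ∀ s ∈ Set.Icc (0:ℝ) T, ContinuousAt (fun r => u j r) s := by
      intro j s hs
      exact ((hD s hs j j.2).continuousAt.sub (hyderiv s hs j).continuousAt)
    have hA_closed : IsClosed A := by
      have : A = ⋃ j : Fin p,
          (Set.Icc (0:ℝ) T ∩ (fun s => u j s - φ s) ⁻¹' Set.Ici 0) := by
        ext s
        constructor
        · rintro ⟨hs, j, hj⟩
          exact Set.mem_iUnion.mpr ⟨j, hs, by simpa [sub_nonneg] using hj⟩
        · intro hs
          obtain ⟨j, hj1, hj2⟩ := Set.mem_iUnion.mp hs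
          exact ⟨hj1, j, by simpa [sub_nonneg] using hj2⟩
      rw [this]
      apply isClosed_iUnion_of_finite
      intro j
      apply ContinuousOn.preimage_isClosed_of_isClosed _ isClosed_Icc isClosed_Ici
      intro s hs
      exact ((hucont j s hs).sub (by fun_prop)).continuousWithinAt
    set t' := sInf A with ht'def
    have ht'A : t' ∈ A := hA_closed.csInf_mem hA_ne hA_bdd
    obtain ⟨ht'Icc, i₀, hi₀⟩ := ht'A
    have hu0 : ∀ j : Fin p, u j 0 = 0 := by
      intro j
      simp [hudef, h𝓏0, hy0 j]
    have ht'pos : 0 < t' := by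
      rcases eq_or_lt_of_le ht'Icc.1 with h | h
      · exfalso
        have := hi₀
        rw [← h] at this
        rw [hu0 i₀] at this
        have := lt_of_lt_of_le (hφpos 0) this
        exact lt_irrefl _ this
      · exact h
    have hbefore : ∀ s, 0 ≤ s → s < t' → ∀ j : Fin p, u j s < φ s := by
      intro s hs0 hst j
      by_contra hle
      push_neg at hle
      have hsA : s ∈ A := ⟨⟨hs0, le_trans hst.le ht'Icc.2⟩, j, hle⟩
      exact absurd (csInf_le hA_bdd hsA) (not_le.mpr hst)
    -- all components are ≤ φ at t'
    have hle_all : ∀ j : Fin p, u j t' ≤ φ t' := by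
      intro j
      have hcont : ContinuousAt (fun s => u j s - φ s) t' :=
        (hucont j t' ht'Icc).sub (by fun_prop)
      have htend : Filter.Tendsto (fun s => u j s - φ s) (𝓝[<] t')
          (𝓝 (u j t' - φ t')) := hcont.continuousWithinAt
      have hmem : Set.Ioi (0:ℝ) ∩ Set.Iio t' ∈ 𝓝[<] t' :=
        Filter.inter_mem (mem_nhdsWithin_of_mem_nhds (Ioi_mem_nhds ht'pos))
          self_mem_nhdsWithin
      have hev : ∀ᶠ s in 𝓝[<] t', u j s - φ s ≤ 0 := by
        filter_upwards [hmem] with s hs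
        have := hbefore s (le_of_lt hs.1) hs.2 j
        linarith
      have := le_of_tendsto htend hev
      linarith
    have hi₀eq : u i₀ t' = φ t' := le_antisymm (hle_all i₀) hi₀
    -- derivative of φ
    have hφ' : HasDerivAt φ (K * φ t') t' := by
      have h1 : HasDerivAt (fun s : ℝ => K * s) K t' := by
        simpa using (hasDerivAt_id t').const_mul K
      have h2 : HasDerivAt (fun s : ℝ => Real.exp (K * s))
          (Real.exp (K * t') * K) t' := (Real.hasDerivAt_exp (K * t')).comp t' h1
      have h3 := h2.const_mul ε
      have : ε * (Real.exp (K * t') * K) = K * φ t' := by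
        simp only [hφdef]; ring
      rw [this] at h3
      exact h3
    -- slope argument : derivative of a function nonpositive before t', nonneg at t'
    have slope_nonneg : ∀ (g : ℝ → ℝ) (δ : ℝ), HasDerivAt g δ t' →
        (∀ s, 0 < s → s < t' → g s < 0) → 0 ≤ g t' → 0 ≤ δ := by
      intro g δ hg hneg hg0
      have htend : Filter.Tendsto (slope g t') (𝓝[<] t') (𝓝 δ) :=
        (hasDerivAt_iff_tendsto_slope.mp hg).mono_left
          (nhdsWithin_mono _ (fun x hx => ne_of_lt hx))
      apply ge_of_tendsto htend
      have hmem : Set.Ioi (0:ℝ) ∩ Set.Iio t' ∈ 𝓝[<] t' :=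
        Filter.inter_mem (mem_nhdsWithin_of_mem_nhds (Ioi_mem_nhds ht'pos))
          self_mem_nhdsWithin
      filter_upwards [hmem] with s hs
      have h1 : g s < 0 := hneg s hs.1 hs.2
      have h2 : s - t' < 0 := sub_neg.mpr hs.2
      rw [slope_def_field]
      have : g s - g t' < 0 := by linarith
      exact le_of_lt (div_pos_of_neg_of_neg this h2)
    by_cases hcase : (i₀ : ℕ) + 1 < p
    · -- interior row of the companion matrix
      have hDi := hD t' ht'Icc i₀ i₀.2
      have hyd' : HasDerivAt (fun s => y s i₀) (y t' ⟨(i₀ : ℕ) + 1, hcase⟩) t' := by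
        have := hyderiv t' ht'Icc i₀
        rwa [dif_pos hcase] at this
      have hud : HasDerivAt (fun s => u i₀ s)
          (u ⟨(i₀ : ℕ) + 1, hcase⟩ t') t' := by
        simpa [hudef, Pi.sub_def] using hDi.sub hyd'
      have hδ : HasDerivAt (fun s => u i₀ s - φ s)
          (u ⟨(i₀ : ℕ) + 1, hcase⟩ t' - K * φ t') t' := hud.sub hφ'
      have h0le := slope_nonneg _ _ hδ
        (fun s hs0 hst => by have := hbefore s (le_of_lt hs0) hst i₀; linarith)
        (by linarith [hi₀])
      have h1 : u ⟨(i₀ : ℕ) + 1, hcase⟩ t' ≤ φ t' := hle_all _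
      have h2 : φ t' < K * φ t' := by
        nlinarith [hφpos t']
      linarith
    · -- last row of the companion matrix
      have hlast : (i₀ : ℕ) + 1 = p := by have := i₀.2; omega
      have hDi : HasDerivAt (fun s => lieDerivIter Z Γ i₀ (𝓏 s))
          (lieDerivIter Z Γ p (𝓏 t')) t' := by
        have := hD t' ht'Icc i₀ i₀.2
        rwa [hlast] at this
      have hyd' : HasDerivAt (fun s => y s i₀) (∑ j : Fin p, χ j * y t' j) t' := by
        have := hyderiv t' ht'Icc i₀
        rwa [dif_neg hcase] at this
      have hud : HasDerivAt (fun s => u i₀ s)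
          (lieDerivIter Z Γ p (𝓏 t') - ∑ j : Fin p, χ j * y t' j) t' := by
        simpa [hudef, Pi.sub_def] using hDi.sub hyd'
      have hδ : HasDerivAt (fun s => u i₀ s - φ s)
          (lieDerivIter Z Γ p (𝓏 t') - (∑ j : Fin p, χ j * y t' j) - K * φ t') t' :=
        hud.sub hφ'
      have h0le := slope_nonneg _ _ hδ
        (fun s hs0 hst => by have := hbefore s (le_of_lt hs0) hst i₀; linarith)
        (by linarith [hi₀])
      -- bound the derivative using the differential inequality
      have hM := hineq (𝓏 t') (h𝓏M t' ht'Icc)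
      have hsum : ∑ j : Fin p, χ j * lieDerivIter Z Γ j (𝓏 t') - ∑ j : Fin p, χ j * y t' j
          = ∑ j : Fin p, χ j * u j t' := by
        rw [← Finset.sum_sub_distrib]
        apply Finset.sum_congr rfl
        intro j _
        simp [hudef]; ring
      have hbound : ∑ j : Fin p, χ j * u j t' ≤ (∑ j : Fin p, |χ j|) * φ t' := by
        rw [Finset.sum_mul]
        apply Finset.sum_le_sum
        intro j _
        by_cases hj : (j : ℕ) + 1 < p
        · have hχj := hχ j hj
          calc χ j * u j t' ≤ χ j * φ t' :=
                mul_le_mul_of_nonneg_left (hle_all j) hχj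
            _ ≤ |χ j| * φ t' :=
                mul_le_mul_of_nonneg_right (le_abs_self _) (le_of_lt (hφpos t'))
        · have : j = i₀ := by
            apply Fin.ext
            have := j.2
            omega
          rw [this, hi₀eq]
          exact mul_le_mul_of_nonneg_right (le_abs_self _) (le_of_lt (hφpos t'))
      have hKφ : (∑ j : Fin p, |χ j|) * φ t' < K * φ t' :=
        mul_lt_mul_of_pos_right hKsum (hφpos t')
      linarith
  -- conclude by letting ε → 0
  intro t ht i
  by_contra hpos
  push_neg at hpos
  set c := lieDerivIter Z Γ i (𝓏 t) - y t i with hcdef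
  have hc0 : 0 < c := sub_pos.mpr hpos
  have hexp : 0 < Real.exp (K * t) := Real.exp_pos _
  have hkey := key (c / (2 * Real.exp (K * t))) (by positivity) t ht i
  rw [← hcdef] at hkey
  have heq : c / (2 * Real.exp (K * t)) * Real.exp (K * t) = c / 2 := by
    field_simp
  rw [heq] at hkey
  linarith
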